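/- Let F : ℝ → ℝ>0 and H : ℝ → ℝ be differentiable on all of ℝ with F' = F·H and H' ≥ 2ε·F^{-2} − 2H² for some ε > 0. Then H has a zero. (Equivalently: H cannot be everywhere negative on ℝ, since then F would be decreasing, forcing F·H → 0 and H → 0 as t → ∞, which by the differential inequality makes H' eventually bounded below by a positive constant, a contradiction.) -/

import Mathlib

/-- If `F > 0` and `H` are differentiable on all of `ℝ` with `F' = F·H` and
`H' ≥ 2ε F⁻² − 2H²` for some `ε > 0`, then `H` has a zero. -/
theorem stmt_14 (F H H' : ℝ → ℝ) (ε : ℝ) (hε : 0 < ε)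
    (hFpos : ∀ t : ℝ, 0 < F t)
    (hF : ∀ t : ℝ, HasDerivAt F (F t * H t) t)
    (hH : ∀ t : ℝ, HasDerivAt H (H' t) t)
    (hineq : ∀ t : ℝ, 2 * ε / (F t) ^ 2 - 2 * (H t) ^ 2 ≤ H' t) :
    ∃ t : ℝ, H t = 0 := by
  set φ : ℝ → ℝ := fun t => (F t) ^ 2 * H t with hφdef
  have hφd : ∀ t, HasDerivAt φ (2 * (F t) ^ 2 * (H t) ^ 2 + (F t) ^ 2 * H' t) t := by
    intro t
    have h1 := ((hF t).pow 2).mul (hH t)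
    replace h1 : HasDerivAt φ _ t := h1
    convert h1 using 1
    simp only [Nat.cast_ofNat, Pi.pow_apply]
    ring
  have hlow : ∀ t, 2 * ε ≤ 2 * (F t) ^ 2 * (H t) ^ 2 + (F t) ^ 2 * H' t := by
    intro t
    have hF2 : (0:ℝ) < (F t) ^ 2 := pow_pos (hFpos t) 2
    have h := hineq t
    have h2 : 2 * ε / (F t) ^ 2 ≤ H' t + 2 * (H t) ^ 2 := by linarith
    rw [div_le_iff₀ hF2] at h2
    nlinarith
  -- ψ t = φ t - 2 ε t is monotone
  set ψ : ℝ → ℝ := fun t => φ t - 2 * ε * t with hψdef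
  have hψd : ∀ t, HasDerivAt ψ (2 * (F t) ^ 2 * (H t) ^ 2 + (F t) ^ 2 * H' t - 2 * ε) t := by
    intro t
    have := (hφd t).sub (((hasDerivAt_id t).const_mul (2 * ε)))
    simp only [mul_one, id] at this
    exact this
  have hmono : Monotone ψ := by
    apply monotone_of_deriv_nonneg
    · exact fun t => (hψd t).differentiableAt
    · intro t
      rw [(hψd t).deriv]
      linarith [hlow t]
  have hcont : Continuous φ := by
    rw [continuous_iff_continuousAt]
    exact fun t => (hφd t).continuousAt
  set M : ℝ := (|ψ 0| + 1) / (2 * ε) with hM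
  have hεpos : (0:ℝ) < 2 * ε := by linarith
  have hMpos : 0 < M := div_pos (by positivity) hεpos
  have h2εM : 2 * ε * M = |ψ 0| + 1 := by
    rw [hM]
    field_simp
  have hupper : 0 < φ M := by
    have := hmono (le_of_lt hMpos)
    have : ψ 0 ≤ φ M - 2 * ε * M := this
    have habs := abs_nonneg (ψ 0)
    have hle := neg_abs_le (ψ 0)
    linarith
  have hlower : φ (-M) < 0 := by
    have h := hmono (show -M ≤ 0 by linarith)
    have : φ (-M) - 2 * ε * (-M) ≤ ψ 0 := h
    have hle := le_abs_self (ψ 0)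
    have : φ (-M) ≤ ψ 0 - (|ψ 0| + 1) := by
      have : 2 * ε * (-M) = -(|ψ 0| + 1) := by rw [mul_neg, h2εM]
      linarith
    linarith
  have h0mem : (0:ℝ) ∈ Set.Icc (φ (-M)) (φ M) := ⟨le_of_lt hlower, le_of_lt hupper⟩
  obtain ⟨t, _, ht⟩ := intermediate_value_Icc (by linarith : -M ≤ M) hcont.continuousOn h0mem
  refine ⟨t, ?_⟩
  have hF2 : (F t) ^ 2 ≠ 0 := ne_of_gt (pow_pos (hFpos t) 2)
  have : (F t) ^ 2 * H t = 0 := ht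
  exact (mul_eq_zero.mp this).resolve_left hF2
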